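/- If M = S(cl(Θ)) is convex, then for every t ∈ (0,1)^m the φ-projection of t on M exists and is unique: there is exactly one s* ∈ M with D_φ(s*∣t) = inf_{s∈M} D_φ(s∣t). -/

import Mathlib

open Filter Topology

/-- The extended-real-valued integrand `f(v,w)` of a `φ`-divergence:
`f(v,w) = w·φ(v/w)` if `w > 0`, `f(v,0) = v·L` if `v > 0`, and `f(0,0) = 0`,
where `L = lim_{x→∞} φ(x)/x ∈ ℝ ∪ {∞}`. -/
noncomputable def phiF (φ : ℝ → ℝ) (L : EReal) (v w : ℝ) : EReal :=
  if 0 < w then ((w * φ (v / w) : ℝ) : EReal)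
  else if 0 < v then (v : EReal) * L
  else 0

/-- The `φ`-divergence `D_φ(s∣t) = Σ_{i=1}^m f(s_i, t_i)` of `s` relative to `t`. -/
noncomputable def Dphi (φ : ℝ → ℝ) (L : EReal) {m : ℕ} (s t : Fin m → ℝ) : EReal :=
  ∑ i, phiF φ L (s i) (t i)

/-- `p` is a `φ`-projection of `t` on `M`: `p ∈ M` and `D_φ(p∣t) = inf_{s ∈ M} D_φ(s∣t)`. -/
def IsPhiProj (φ : ℝ → ℝ) (L : EReal) {m : ℕ} (M : Set (Fin m → ℝ))
    (t p : Fin m → ℝ) : Prop :=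
  p ∈ M ∧ Dphi φ L p t = ⨅ s ∈ M, Dphi φ L s t

lemma ereal_coe_sum {ι : Type*} (s : Finset ι) (f : ι → ℝ) :
    ((∑ i ∈ s, f i : ℝ) : EReal) = ∑ i ∈ s, ((f i : ℝ) : EReal) := by
  classical
  induction s using Finset.induction with
  | empty => simp
  | insert a s h ih => simp [Finset.sum_insert h, EReal.coe_add, ih]

/-- under the framework assumptions, if `M = S(cl Θ)` is convex then
for every `t ∈ (0,1)^m` the `φ`-projection of `t` on `M` exists and is unique. -/
theorem statement14 (m k : ℕ) (hm : 1 ≤ m) (hk : 1 ≤ k) (hkm : k ≤ m)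
    (φ : ℝ → ℝ) (L : EReal)
    (hφconv : ConvexOn ℝ (Set.Ici 0) φ)
    (hφ0 : ContinuousWithinAt φ (Set.Ici 0) 0)
    (hL : Tendsto (fun x : ℝ => ((φ x / x : ℝ) : EReal)) atTop (𝓝 L))
    (hφsc : StrictConvexOn ℝ (Set.Ici (0 : ℝ)) φ)
    (hφC2 : ContDiffOn ℝ 2 φ (Set.Ioi (0 : ℝ)))
    (Θ : Set (Fin k → ℝ)) (hΘbd : Bornology.IsBounded Θ)
    (hΘint : (interior Θ).Nonempty)
    (S : (Fin k → ℝ) → (Fin m → ℝ))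
    (hScont : ContinuousOn S (closure Θ))
    (hSinj : Set.InjOn S (closure Θ))
    (hSC2 : ContDiffOn ℝ 2 S (interior Θ))
    (hSrange : ∀ θ ∈ closure Θ, ∀ i, S θ i ∈ Set.Icc (0 : ℝ) 1)
    (hSint : ∀ θ ∈ interior Θ, ∀ i, S θ i ∈ Set.Ioo (0 : ℝ) 1)
    (hMconv : Convex ℝ (S '' closure Θ)) :
    ∀ t : Fin m → ℝ, (∀ i, t i ∈ Set.Ioo (0 : ℝ) 1) →
      ∃! s, IsPhiProj φ L (S '' closure Θ) t s := by
  intro t ht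
  have htpos : ∀ i, 0 < t i := fun i => (ht i).1
  set M : Set (Fin m → ℝ) := S '' closure Θ with hMdef
  have hΘne : (closure Θ).Nonempty := hΘint.mono (interior_subset.trans subset_closure)
  have hKc : IsCompact (closure Θ) := hΘbd.isCompact_closure
  have hMc : IsCompact M := hKc.image_of_continuousOn hScont
  have hMne : M.Nonempty := hΘne.image _
  have hMnonneg : ∀ p ∈ M, ∀ i, (0:ℝ) ≤ p i := by
    rintro p ⟨θ, hθ, rfl⟩ i
    exact (hSrange θ hθ i).1
  -- continuity of φ on Ici 0
  have hφcont : ContinuousOn φ (Set.Ici 0) := by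
    intro x hx
    rcases eq_or_lt_of_le (Set.mem_Ici.1 hx : (0:ℝ) ≤ x) with h | h
    · rw [← h]; exact hφ0
    · have h1 : ConvexOn ℝ (Set.Ioi (0:ℝ)) φ :=
        hφconv.subset (Set.Ioi_subset_Ici le_rfl) (convex_Ioi 0)
      have h2 : ContinuousOn φ (Set.Ioi 0) := h1.continuousOn isOpen_Ioi
      exact (h2.continuousAt (isOpen_Ioi.mem_nhds h)).continuousWithinAt
  -- the real-valued objective
  set g : (Fin m → ℝ) → ℝ := fun s => ∑ i, t i * φ (s i / t i) with hgdef
  have hDg : ∀ s : Fin m → ℝ, Dphi φ L s t = ((g s : ℝ) : EReal) := by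
    intro s
    rw [hgdef]
    simp only [Dphi, phiF]
    rw [ereal_coe_sum]
    refine Finset.sum_congr rfl fun i _ => ?_
    rw [if_pos (htpos i)]
  -- continuity of g on M
  have hgcont : ContinuousOn g M := by
    apply continuousOn_finset_sum
    intro i _
    apply ContinuousOn.mul continuousOn_const
    apply hφcont.comp
    · exact (by fun_prop : Continuous fun s : Fin m → ℝ => s i / t i).continuousOn
    · intro s hs
      exact Set.mem_Ici.2 (div_nonneg (hMnonneg s hs i) (htpos i).le)
  obtain ⟨p, hpM, hpmin⟩ := hMc.exists_isMinOn hMne hgcont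
  have hpmin' : ∀ s ∈ M, g p ≤ g s := fun s hs => hpmin hs
  have hinf : (⨅ s ∈ M, Dphi φ L s t) = ((g p : ℝ) : EReal) := by
    apply le_antisymm
    · exact iInf₂_le_of_le p hpM (hDg p).le
    · refine le_iInf₂ fun s hs => ?_
      rw [hDg s]
      exact_mod_cast hpmin' s hs
  -- key: any minimizer equals p
  have huniq : ∀ q ∈ M, g q = g p → q = p := by
    intro q hqM hgq
    by_contra hne
    obtain ⟨i₀, hi₀⟩ := Function.ne_iff.1 hne
    set r : Fin m → ℝ := (1/2 : ℝ) • q + (1/2 : ℝ) • p with hrdef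
    have hrM : r ∈ M := hMconv hqM hpM (by norm_num) (by norm_num) (by norm_num)
    have hterm : ∀ i, t i * φ (r i / t i) ≤
        (1/2) * (t i * φ (q i / t i)) + (1/2) * (t i * φ (p i / t i)) := by
      intro i
      have hx : q i / t i ∈ Set.Ici (0:ℝ) := div_nonneg (hMnonneg q hqM i) (htpos i).le
      have hy : p i / t i ∈ Set.Ici (0:ℝ) := div_nonneg (hMnonneg p hpM i) (htpos i).le
      have hc := hφconv.2 hx hy (by norm_num : (0:ℝ) ≤ 1/2) (by norm_num : (0:ℝ) ≤ 1/2)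
        (by norm_num)
      have hri : r i / t i = (1/2 : ℝ) * (q i / t i) + (1/2 : ℝ) * (p i / t i) := by
        simp only [hrdef, Pi.add_apply, Pi.smul_apply, smul_eq_mul]
        field_simp
      rw [hri]
      calc t i * φ ((1/2 : ℝ) * (q i / t i) + (1/2 : ℝ) * (p i / t i))
          ≤ t i * ((1/2 : ℝ) * φ (q i / t i) + (1/2 : ℝ) * φ (p i / t i)) := by
            apply mul_le_mul_of_nonneg_left _ (htpos i).le
            simpa [smul_eq_mul] using hc
        _ = (1/2) * (t i * φ (q i / t i)) + (1/2) * (t i * φ (p i / t i)) := by ring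
    have hterm₀ : t i₀ * φ (r i₀ / t i₀) <
        (1/2) * (t i₀ * φ (q i₀ / t i₀)) + (1/2) * (t i₀ * φ (p i₀ / t i₀)) := by
      have hx : q i₀ / t i₀ ∈ Set.Ici (0:ℝ) := div_nonneg (hMnonneg q hqM i₀) (htpos i₀).le
      have hy : p i₀ / t i₀ ∈ Set.Ici (0:ℝ) := div_nonneg (hMnonneg p hpM i₀) (htpos i₀).le
      have hxy : q i₀ / t i₀ ≠ p i₀ / t i₀ := by
        intro h
        apply hi₀
        field_simp [(htpos i₀).ne'] at h
        exact h
      have hc := hφsc.2 hx hy hxy (by norm_num : (0:ℝ) < 1/2) (by norm_num : (0:ℝ) < 1/2)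
        (by norm_num)
      have hri : r i₀ / t i₀ = (1/2 : ℝ) * (q i₀ / t i₀) + (1/2 : ℝ) * (p i₀ / t i₀) := by
        simp only [hrdef, Pi.add_apply, Pi.smul_apply, smul_eq_mul]
        field_simp
      rw [hri]
      calc t i₀ * φ ((1/2 : ℝ) * (q i₀ / t i₀) + (1/2 : ℝ) * (p i₀ / t i₀))
          < t i₀ * ((1/2 : ℝ) * φ (q i₀ / t i₀) + (1/2 : ℝ) * φ (p i₀ / t i₀)) := by
            apply mul_lt_mul_of_pos_left _ (htpos i₀)
            simpa [smul_eq_mul] using hc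
        _ = (1/2) * (t i₀ * φ (q i₀ / t i₀)) + (1/2) * (t i₀ * φ (p i₀ / t i₀)) := by ring
    have hsum : g r < ∑ i, ((1/2) * (t i * φ (q i / t i)) + (1/2) * (t i * φ (p i / t i))) := by
      apply Finset.sum_lt_sum (fun i _ => hterm i) ⟨i₀, Finset.mem_univ i₀, hterm₀⟩
    have : g r < g p := by
      have heq : ∑ i, ((1/2) * (t i * φ (q i / t i)) + (1/2) * (t i * φ (p i / t i)))
          = (1/2) * g q + (1/2) * g p := by
        rw [hgdef]
        simp only [Finset.sum_add_distrib, Finset.mul_sum]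
      rw [heq, hgq] at hsum
      linarith
    exact absurd (hpmin' r hrM) (not_le.2 this)
  refine ⟨p, ⟨hpM, (hDg p).trans hinf.symm⟩, ?_⟩
  rintro q ⟨hqM, hqeq⟩
  have : ((g q : ℝ) : EReal) = ((g p : ℝ) : EReal) := by
    rw [← hDg q, hqeq, hinf]
  exact huniq q hqM (by exact_mod_cast this)
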